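/- For every n ∈ ℕ and all (x,ξ) ∈ ℝ², the Wigner function of the n-th Hermite function with itself satisfies H_1(H_n, H_n)(x,ξ) = 2 (−1)^n e^{−(x²+ξ²)} L_n(2(x²+ξ²)). -/

import Mathlib

open MeasureTheory

noncomputable section

/-- The `n`-th Laguerre polynomial `L_n(x) = Σ_{k=0}^n (n choose k) (−x)^k / k!`. -/
def laguerreFun (n : ℕ) (x : ℝ) : ℝ :=
  ∑ k ∈ Finset.range (n + 1), (n.choose k : ℝ) * (-x) ^ k / (k.factorial : ℝ)

/-- The `n`-th Hermite function. -/
def hermiteFun (n : ℕ) (x : ℝ) : ℝ :=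
  (Real.sqrt (2 ^ n * n.factorial * Real.sqrt Real.pi))⁻¹ * (-1) ^ n *
    Real.exp (x ^ 2 / 2) * iteratedDeriv n (fun y => Real.exp (-y ^ 2)) x

/-- The one-dimensional Wigner function `H_h(f, g, (x, ξ))`. -/
def wigner1 (h : ℝ) (f g : ℝ → ℂ) (x ξ : ℝ) : ℂ :=
  ∫ t : ℝ, Complex.exp (-(Complex.I / (h : ℂ)) * ((t * ξ : ℝ) : ℂ)) *
    f (x + t / 2) * (starRingEnd ℂ) (g (x - t / 2))


open Polynomial

noncomputable section

/-- Physicists' Hermite polynomials. -/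
def hermP (R : Type*) [CommRing R] : ℕ → Polynomial R
  | 0 => 1
  | 1 => C 2 * X
  | (n+2) => C 2 * X * hermP R (n+1) - C ((2*(n+1) : ℕ) : R) * hermP R n

variable {R : Type*} [CommRing R]

lemma hermP_succ' (n : ℕ) :
    hermP R (n+1) = C 2 * X * hermP R n - C ((2*n : ℕ) : R) * hermP R (n-1) := by
  cases n with
  | zero => simp [hermP]
  | succ m => rfl

lemma hermP_derivative (n : ℕ) :
    derivative (hermP R n) = C ((2*n : ℕ) : R) * hermP R (n-1) := by
  induction n using Nat.twoStepInduction with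
  | zero => simp [hermP]
  | one => simp [hermP, map_ofNat]
  | more n ih1 ih2 =>
      show derivative (hermP R (n+2)) = _
      rw [show hermP R (n+2) = C 2 * X * hermP R (n+1) - C ((2*(n+1) : ℕ) : R) * hermP R n
          from rfl]
      rw [derivative_sub, derivative_mul, derivative_mul, derivative_mul, ih1, ih2]
      rw [show (n+1) - 1 = n from rfl]
      rw [show (n+2) - 1 = n+1 from rfl]
      simp only [derivative_C, derivative_X]
      rw [hermP_succ' (R := R) n]
      simp only [Nat.cast_mul, Nat.cast_add, Nat.cast_one, Nat.cast_ofNat, C_mul, C_add, C_1, map_ofNat]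
      ring

/-- Gaussian moments: `mom n = ∫ x^n e^{-x²} dx / √π` (algebraically defined). -/
def mom : ℕ → ℂ
  | 0 => 1
  | 1 => 0
  | (n+2) => ((n:ℂ)+1)/2 * mom n

lemma mom_succ (n : ℕ) : mom (n+1) = (n : ℂ)/2 * mom (n-1) := by
  cases n with
  | zero => simp [mom]
  | succ m => show mom (m+2) = _; rw [mom]; push_cast; norm_num

/-- The Gaussian moment functional. -/
def EG (p : Polynomial ℂ) : ℂ := p.sum fun m a => a * mom m

@[simp] lemma EG_zero : EG 0 = 0 := by simp [EG]

@[simp] lemma EG_monomial (m : ℕ) (a : ℂ) : EG (monomial m a) = a * mom m := by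
  simp [EG, Polynomial.sum_monomial_index]

lemma EG_add (p q : Polynomial ℂ) : EG (p + q) = EG p + EG q := by
  simp [EG, Polynomial.sum_add_index, add_mul]

@[simp] lemma EG_one : EG 1 = 1 := by
  simpa [mom] using EG_monomial 0 1

lemma EG_C_mul (a : ℂ) (p : Polynomial ℂ) : EG (C a * p) = a * EG p := by
  induction p using Polynomial.induction_on' with
  | add p q hp hq => rw [mul_add, EG_add, EG_add, hp, hq, mul_add]
  | monomial m b => rw [C_mul_monomial, EG_monomial, EG_monomial]; ring

lemma EG_sub (p q : Polynomial ℂ) : EG (p - q) = EG p - EG q := by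
  have := EG_add (p - q) q
  rw [sub_add_cancel] at this
  rw [this]; ring

lemma EG_X_mul (p : Polynomial ℂ) : EG (X * p) = EG (derivative p) / 2 := by
  induction p using Polynomial.induction_on' with
  | add p q hp hq => rw [mul_add, EG_add, derivative_add, EG_add, hp, hq, add_div]
  | monomial m b =>
      rw [X_mul_monomial, EG_monomial, derivative_monomial, EG_monomial, mom_succ]
      ring

end
noncomputable section
open Polynomial Finset
variable {R : Type*} [CommRing R]

lemma hermP_map {S : Type*} [CommRing S] (f : R →+* S) (n : ℕ) :
    (hermP R n).map f = hermP S n := by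
  induction n using Nat.twoStepInduction with
  | zero => simp [hermP]
  | one => simp [hermP, map_ofNat]
  | more n ih1 ih2 =>
      show (C 2 * X * hermP R (n+1) - C ((2*(n+1) : ℕ) : R) * hermP R n).map f
        = C 2 * X * hermP S (n+1) - C ((2*(n+1) : ℕ) : S) * hermP S n
      simp [Polynomial.map_sub, Polynomial.map_mul, ih1, ih2, map_natCast, map_ofNat]

/-- Hermite shifted by `a`. -/
def Pa (a : ℂ) (m : ℕ) : Polynomial ℂ := (hermP ℂ m).comp (X + C a)
/-- Hermite reflected around `b`. -/
def Qb (b : ℂ) (j : ℕ) : Polynomial ℂ := (hermP ℂ j).comp (C b - X)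
/-- The cross moments. -/
def Sc (a b : ℂ) (m j : ℕ) : ℂ := EG (Pa a m * Qb b j)

variable (a b : ℂ)

lemma Pa_zero : Pa a 0 = 1 := by simp [Pa, hermP]
lemma Qb_zero : Qb b 0 = 1 := by simp [Qb, hermP]

lemma Pa_succ (m : ℕ) :
    Pa a (m+1) = C 2 * (X + C a) * Pa a m - C ((2*m:ℕ):ℂ) * Pa a (m-1) := by
  unfold Pa
  rw [hermP_succ']
  simp [sub_comp, mul_comp, C_comp, X_comp]

lemma Qb_succ (j : ℕ) :
    Qb b (j+1) = C 2 * (C b - X) * Qb b j - C ((2*j:ℕ):ℂ) * Qb b (j-1) := by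
  unfold Qb
  rw [hermP_succ']
  simp [sub_comp, mul_comp, C_comp, X_comp]

lemma Pa_deriv (m : ℕ) : derivative (Pa a m) = C ((2*m:ℕ):ℂ) * Pa a (m-1) := by
  unfold Pa
  rw [derivative_comp, hermP_derivative]
  simp [mul_comp, C_comp]

lemma Qb_deriv (j : ℕ) : derivative (Qb b j) = -(C ((2*j:ℕ):ℂ) * Qb b (j-1)) := by
  unfold Qb
  rw [derivative_comp, hermP_derivative]
  simp [mul_comp, C_comp]

lemma Sc_succ_m (m j : ℕ) :
    Sc a b (m+1) j = 2*a * Sc a b m j - 2*(j:ℂ) * Sc a b m (j-1) := by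
  have hpoly : Pa a (m+1) * Qb b j
      = X * (C 2 * (Pa a m * Qb b j)) + C (2*a) * (Pa a m * Qb b j)
        - C ((2*m:ℕ):ℂ) * (Pa a (m-1) * Qb b j) := by
    rw [Pa_succ, map_mul C 2 a]
    ring
  have hder : derivative (C 2 * (Pa a m * Qb b j))
      = C (2*((2*m:ℕ):ℂ)) * (Pa a (m-1) * Qb b j)
        - C (2*((2*j:ℕ):ℂ)) * (Pa a m * Qb b (j-1)) := by
    rw [derivative_C_mul, derivative_mul, Pa_deriv, Qb_deriv]
    simp only [map_mul]
    ring
  show EG _ = _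
  rw [hpoly, EG_sub, EG_add, EG_X_mul, hder, EG_sub]
  simp only [EG_C_mul]
  show _ = 2*a * EG (Pa a m * Qb b j) - 2*(j:ℂ) * EG (Pa a m * Qb b (j-1))
  push_cast
  ring

lemma Sc_zero (j : ℕ) : Sc a b 0 j = (2*b)^j := by
  induction j with
  | zero => simp [Sc, Pa_zero, Qb_zero]
  | succ j ih =>
      have hpoly : Pa a 0 * Qb b (j+1)
          = C (2*b) * (Pa a 0 * Qb b j) - X * (C 2 * Qb b j)
            - C ((2*j:ℕ):ℂ) * Qb b (j-1) := by
        rw [Pa_zero, Qb_succ, map_mul C 2 b]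
        ring
      have hder : derivative (C 2 * Qb b j) = C (-(2*((2*j:ℕ):ℂ))) * Qb b (j-1) := by
        rw [derivative_C_mul, Qb_deriv]
        simp only [map_neg, map_mul]
        ring
      show EG _ = _
      rw [hpoly, EG_sub, EG_sub, EG_C_mul, EG_C_mul, EG_X_mul, hder, EG_C_mul]
      have hQ : EG (Qb b (j-1)) = EG (Pa a 0 * Qb b (j-1)) := by rw [Pa_zero, one_mul]
      rw [hQ]
      show _ = (2*b)^(j+1)
      rw [show EG (Pa a 0 * Qb b j) = (2*b)^j from ih, pow_succ]
      push_cast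
      ring

end
noncomputable section
open Polynomial Finset

/-- Terms of the closed form for `Sc`. -/
def Tterm (a b : ℂ) (m j k : ℕ) : ℂ :=
  (-1:ℂ)^k * 2^k * (k.factorial : ℂ) * (m.choose k : ℂ) * (j.choose k : ℂ)
    * (2*a)^(m-k) * (2*b)^(j-k)

lemma nat_fact_choose (j i : ℕ) :
    (i+1).factorial * j.choose (i+1) = j * i.factorial * ((j-1).choose i) := by
  cases j with
  | zero => simp
  | succ jj =>
      calc (i+1).factorial * (jj+1).choose (i+1)
          = i.factorial * ((jj+1).choose (i+1) * (i+1)) := by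
            rw [Nat.factorial_succ]; ring
        _ = i.factorial * ((jj+1) * jj.choose i) := by
            rw [← Nat.add_one_mul_choose_eq]
        _ = (jj+1) * i.factorial * jj.choose i := by ring

lemma Sc_closed (a b : ℂ) (m : ℕ) : ∀ j : ℕ,
    Sc a b m j = ∑ k ∈ Finset.range (m+1), Tterm a b m j k := by
  induction m with
  | zero =>
      intro j
      rw [Sc_zero, Finset.sum_range_one]
      simp [Tterm]
  | succ m ih =>
      intro j
      rw [Sc_succ_m, ih j, ih (j-1)]
      symm
      have key : ∀ i ∈ Finset.range (m+1),
          Tterm a b (m+1) j (i+1)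
            = -(2*(j:ℂ) * Tterm a b m (j-1) i) + (2*a) * Tterm a b m j (i+1) := by
        intro i hi
        have hfc : (((i+1).factorial : ℂ)) * (j.choose (i+1) : ℂ)
            = (j:ℂ) * (i.factorial : ℂ) * (((j-1).choose i : ℂ)) := by
          exact_mod_cast congrArg (Nat.cast : ℕ → ℂ) (nat_fact_choose j i)
        rw [Nat.factorial_succ] at hfc
        push_cast at hfc
        have hsub1 : j - 1 - i = j - (i+1) := by omega
        have hsub2 : m + 1 - (i+1) = m - i := by omega
        by_cases him : i = m
        · subst him
          simp only [Tterm, Nat.choose_succ_self, Nat.cast_zero, mul_zero, zero_mul, add_zero,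
            Nat.choose_succ_succ, Nat.choose_self, Nat.cast_add, Nat.cast_one, hsub1, hsub2,
            Nat.sub_self, pow_zero, Nat.factorial_succ, Nat.cast_mul]
          push_cast
          linear_combination (-(-1:ℂ)^i * 2^(i+1) * (2*b)^(j-(i+1))) * hfc
        · have him' : i < m := by
            have := Finset.mem_range.mp hi; omega
          have hsub3 : m - i = (m - (i+1)) + 1 := by omega
          simp only [Tterm, Nat.choose_succ_succ, Nat.cast_add, hsub1, hsub2,
            Nat.factorial_succ, Nat.cast_mul]
          rw [hsub3, pow_succ]
          push_cast
          linear_combination ((-1:ℂ)^i * 2^i * (m.choose i : ℂ) * (2*a)^(m-(i+1)+1)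
            * (2*b)^(j-(i+1)) * (-2:ℂ)) * hfc
      calc ∑ k ∈ Finset.range (m+1+1), Tterm a b (m+1) j k
          = (∑ i ∈ Finset.range (m+1), Tterm a b (m+1) j (i+1)) + Tterm a b (m+1) j 0 :=
            Finset.sum_range_succ' _ (m+1)
        _ = (∑ i ∈ Finset.range (m+1),
              (-(2*(j:ℂ) * Tterm a b m (j-1) i) + (2*a) * Tterm a b m j (i+1)))
            + (2*a) * Tterm a b m j 0 := by
            rw [Finset.sum_congr rfl key]
            congr 1
            simp only [Tterm, Nat.choose_zero_right, Nat.sub_zero, pow_zero, Nat.factorial_zero]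
            rw [pow_succ]
            ring
        _ = -(2*(j:ℂ) * ∑ i ∈ Finset.range (m+1), Tterm a b m (j-1) i)
            + ((∑ i ∈ Finset.range (m+1), (2*a) * Tterm a b m j (i+1)) + (2*a) * Tterm a b m j 0) := by
            rw [Finset.sum_add_distrib]
            have hneg : ∑ i ∈ Finset.range (m+1), -(2*(j:ℂ) * Tterm a b m (j-1) i)
                = -(2*(j:ℂ) * ∑ i ∈ Finset.range (m+1), Tterm a b m (j-1) i) := by
              rw [Finset.mul_sum, ← Finset.sum_neg_distrib]
            rw [hneg]
            ring
        _ = -(2*(j:ℂ) * ∑ i ∈ Finset.range (m+1), Tterm a b m (j-1) i)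
            + ∑ k ∈ Finset.range (m+1+1), (2*a) * Tterm a b m j k := by
            rw [Finset.sum_range_succ' (fun k => (2*a) * Tterm a b m j k) (m+1)]
        _ = 2*a * ∑ k ∈ Finset.range (m+1), Tterm a b m j k
            - 2*(j:ℂ) * ∑ k ∈ Finset.range (m+1), Tterm a b m (j-1) k := by
            rw [Finset.sum_range_succ (fun k => (2*a) * Tterm a b m j k) (m+1)]
            simp only [Tterm, Nat.choose_succ_self, Nat.cast_zero]
            rw [← Finset.mul_sum]
            ring

end
section
open Polynomial Finset

lemma term_id (a b : ℂ) (e j : ℕ) (hc : (((e+j).choose j : ℂ)) * j.factorial * e.factorial = (e+j).factorial) :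
    (-1:ℂ)^j * 2^j * (j.factorial : ℂ) * ((e+j).choose j : ℂ) * ((e+j).choose j : ℂ)
      * (2*a)^e * (2*b)^e
    = (-1:ℂ)^(e+j) * 2^(e+j) * ((e+j).factorial : ℂ) *
        (((e+j).choose j : ℂ) * (-(2*(a*b)))^e / (e.factorial : ℂ)) := by
  have hsq : ((-1:ℂ)^e)*(-1)^e = 1 := by
    rw [← pow_add, ← two_mul, pow_mul]; norm_num
  have he : (e.factorial : ℂ) ≠ 0 := Nat.cast_ne_zero.mpr e.factorial_ne_zero
  field_simp
  rw [neg_pow (2*a*b) e]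
  linear_combination (((e+j).choose j : ℂ) * (-1:ℂ)^(e+j) * 2^(e+j) * (-1:ℂ)^e * (2*a*b)^e) * hc
    - ((-1:ℂ)^j * 2^j * (j.factorial:ℂ) * ((e+j).choose j : ℂ)^2 * (2*a)^e * (2*b)^e
      * (e.factorial:ℂ)) * hsq

lemma Sc_nn (a b : ℂ) (n : ℕ) :
    Sc a b n n = (-1:ℂ)^n * 2^n * (n.factorial : ℂ) *
      ∑ k ∈ Finset.range (n+1), (n.choose k : ℂ) * (-(2*(a*b)))^k / (k.factorial : ℂ) := by
  rw [Sc_closed, Finset.mul_sum,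
    ← Finset.sum_range_reflect
      (fun k => (-1:ℂ)^n * 2^n * (n.factorial : ℂ) *
        ((n.choose k : ℂ) * (-(2*(a*b)))^k / (k.factorial : ℂ))) (n+1)]
  apply Finset.sum_congr rfl
  intro j hj
  have hj' : j ≤ n := by simpa using Nat.lt_succ_iff.mp (Finset.mem_range.mp hj)
  obtain ⟨e, rfl⟩ : ∃ e, n = e + j := ⟨n - j, by omega⟩
  rw [show e + j + 1 - 1 - j = e from by omega]
  have hes : e + j - j = e := by omega
  have hcsymm : (e+j).choose e = (e+j).choose j := by
    have h := Nat.choose_symm (Nat.le_add_left j e)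
    rwa [hes] at h
  have hc : (((e+j).choose j : ℂ)) * j.factorial * e.factorial = ((e+j).factorial : ℂ) := by
    have := Nat.choose_mul_factorial_mul_factorial (show j ≤ e + j by omega)
    rw [hes] at this
    exact_mod_cast congrArg (Nat.cast : ℕ → ℂ) this
  rw [Tterm, hes, hcsymm]
  exact term_id a b e j hc

end
noncomputable section
open Polynomial MeasureTheory Complex Filter

/-- real Gaussian with linear term is integrable -/
lemma integrable_rexp_quad (c : ℝ) : Integrable (fun x : ℝ => Real.exp (-x^2 + c*x)) := by
  have h := (integrable_cexp_quadratic (b := 1) (by norm_num) (c : ℂ) 0).norm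
  refine h.congr (Eventually.of_forall fun x => ?_)
  simp only [Complex.norm_exp]
  congr 1
  simp only [Complex.add_re, Complex.mul_re, Complex.neg_re, Complex.ofReal_re,
    Complex.ofReal_im, Complex.zero_re, Complex.one_re, Complex.one_im, Complex.neg_im,
    ← Complex.ofReal_pow]
  ring

lemma norm_pow_gauss (k : ℕ) (c : ℂ) (x : ℝ) :
    ‖(x:ℂ)^k * Complex.exp (-(x:ℂ)^2 + c*x)‖
      = |x|^k * Real.exp (-x^2 + c.re*x) := by
  rw [norm_mul, norm_pow, Complex.norm_real, Real.norm_eq_abs,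
    Complex.norm_exp]
  congr 2
  simp only [Complex.add_re, Complex.mul_re, Complex.neg_re, Complex.ofReal_re,
    Complex.ofReal_im, Complex.zero_re, Complex.one_re, Complex.one_im, Complex.neg_im,
    ← Complex.ofReal_pow]
  ring

lemma pow_gauss_bound (k : ℕ) (c : ℂ) (x : ℝ) :
    ‖(x:ℂ)^k * Complex.exp (-(x:ℂ)^2 + c*x)‖
      ≤ Real.exp (-x^2 + (c.re + k)*x) + Real.exp (-x^2 + (c.re - k)*x) := by
  rw [norm_pow_gauss]
  have h1 : |x|^k ≤ Real.exp (k * |x|) := by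
    calc |x|^k ≤ (Real.exp |x|)^k := by
          refine pow_le_pow_left₀ (abs_nonneg x) ?_ k
          linarith [Real.add_one_le_exp |x|]
      _ = Real.exp (k * |x|) := by rw [← Real.exp_nat_mul]
  have h2 : |x|^k * Real.exp (-x^2 + c.re*x) ≤ Real.exp (k*|x|) * Real.exp (-x^2 + c.re*x) :=
    mul_le_mul_of_nonneg_right h1 (Real.exp_pos _).le
  refine h2.trans ?_
  rw [← Real.exp_add]
  rcases abs_cases x with ⟨h, _⟩ | ⟨h, _⟩
  · rw [h]
    calc Real.exp (k*x + (-x^2 + c.re*x)) = Real.exp (-x^2 + (c.re + k)*x) := by ring_nf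
      _ ≤ _ := le_add_of_nonneg_right (Real.exp_pos _).le
  · rw [h]
    calc Real.exp (k*(-x) + (-x^2 + c.re*x)) = Real.exp (-x^2 + (c.re - k)*x) := by ring_nf
      _ ≤ _ := le_add_of_nonneg_left (Real.exp_pos _).le

lemma integrable_pow_gauss (k : ℕ) (c : ℂ) :
    Integrable (fun x : ℝ => (x:ℂ)^k * Complex.exp (-(x:ℂ)^2 + c*x)) := by
  refine Integrable.mono' ((integrable_rexp_quad (c.re + k)).add (integrable_rexp_quad (c.re - k)))
    ?_ (Eventually.of_forall fun x => pow_gauss_bound k c x)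
  apply Continuous.aestronglyMeasurable
  exact (Complex.continuous_ofReal.pow k).mul
    (Complex.continuous_exp.comp (by continuity))

lemma rexp_quad_tendsto_top (r : ℝ) :
    Tendsto (fun x : ℝ => Real.exp (-x^2 + r*x)) atTop (nhds 0) := by
  have h1 : Tendsto (fun x : ℝ => x * (x - r)) atTop atTop :=
    tendsto_id.atTop_mul_atTop₀ (tendsto_atTop_add_const_right _ (-r) tendsto_id)
  have h2 : Tendsto (fun x : ℝ => -x^2 + r*x) atTop atBot := by
    have := tendsto_neg_atTop_atBot.comp h1
    refine this.congr fun x => ?_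
    simp only [Function.comp]
    ring
  exact Real.tendsto_exp_atBot.comp h2

lemma rexp_quad_tendsto_bot (r : ℝ) :
    Tendsto (fun x : ℝ => Real.exp (-x^2 + r*x)) atBot (nhds 0) := by
  have h1 : Tendsto (fun x : ℝ => x * (x - r)) atBot atTop := by
    refine Filter.Tendsto.atBot_mul_atBot₀ tendsto_id
      (tendsto_atBot_add_const_right _ (-r) tendsto_id)
  have h2 : Tendsto (fun x : ℝ => -x^2 + r*x) atBot atBot := by
    have := tendsto_neg_atTop_atBot.comp h1
    refine this.congr fun x => ?_
    simp only [Function.comp]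
    ring
  exact Real.tendsto_exp_atBot.comp h2

lemma pow_gauss_tendsto_top (k : ℕ) (c : ℂ) :
    Tendsto (fun x : ℝ => (x:ℂ)^k * Complex.exp (-(x:ℂ)^2 + c*x)) atTop (nhds 0) := by
  refine squeeze_zero_norm (fun x => pow_gauss_bound k c x) ?_
  simpa using (rexp_quad_tendsto_top (c.re + k)).add (rexp_quad_tendsto_top (c.re - k))

lemma pow_gauss_tendsto_bot (k : ℕ) (c : ℂ) :
    Tendsto (fun x : ℝ => (x:ℂ)^k * Complex.exp (-(x:ℂ)^2 + c*x)) atBot (nhds 0) := by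
  refine squeeze_zero_norm (fun x => pow_gauss_bound k c x) ?_
  simpa using (rexp_quad_tendsto_bot (c.re + k)).add (rexp_quad_tendsto_bot (c.re - k))

lemma integral_deriv_zero {f f' : ℝ → ℂ} (hd : ∀ x, HasDerivAt f (f' x) x)
    (hi : Integrable f') (ht : Tendsto f atTop (nhds 0)) (hb : Tendsto f atBot (nhds 0)) :
    ∫ x : ℝ, f' x = 0 := by
  have h1 : Tendsto (fun R : ℝ => ∫ x in (-R)..R, f' x) atTop (nhds (∫ x : ℝ, f' x)) :=
    intervalIntegral_tendsto_integral hi tendsto_neg_atTop_atBot tendsto_id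
  have h2 : (fun R : ℝ => ∫ x in (-R)..R, f' x) = fun R => f R - f (-R) := by
    funext R
    exact intervalIntegral.integral_eq_sub_of_hasDerivAt (fun x _ => hd x)
      hi.intervalIntegrable
  rw [h2] at h1
  have h3 : Tendsto (fun R : ℝ => f R - f (-R)) atTop (nhds 0) := by
    simpa using ht.sub (hb.comp tendsto_neg_atTop_atBot)
  exact tendsto_nhds_unique h1 h3

end
noncomputable section
open Polynomial MeasureTheory Complex Filter

/-- integration by parts recurrence for Gaussian moments -/
lemma ibp_gauss (k : ℕ) (c : ℂ) :
    2 * ∫ x : ℝ, (x:ℂ)^(k+1) * Complex.exp (-(x:ℂ)^2 + c*x)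
      = (k:ℂ) * (∫ x : ℝ, (x:ℂ)^(k-1) * Complex.exp (-(x:ℂ)^2 + c*x))
        + c * ∫ x : ℝ, (x:ℂ)^k * Complex.exp (-(x:ℂ)^2 + c*x) := by
  set e : ℝ → ℂ := fun x => Complex.exp (-(x:ℂ)^2 + c*x) with he
  have hd : ∀ x : ℝ, HasDerivAt (fun y : ℝ => (y:ℂ)^k * e y)
      ((k:ℂ) * ((x:ℂ)^(k-1) * e x) + c * ((x:ℂ)^k * e x) + (-2) * ((x:ℂ)^(k+1) * e x)) x := by
    intro x
    have hF : HasDerivAt (fun w : ℂ => w^k * Complex.exp (-w^2 + c*w))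
        ((k:ℂ)*(x:ℂ)^(k-1) * Complex.exp (-(x:ℂ)^2+c*x)
          + (x:ℂ)^k * (Complex.exp (-(x:ℂ)^2+c*x) * (-(2*(x:ℂ))+c))) (x:ℂ) := by
      have hq : HasDerivAt (fun w : ℂ => -w^2 + c*w) (-(2*(x:ℂ)) + c) (x:ℂ) := by
        have h1 := (hasDerivAt_pow 2 ((x:ℝ):ℂ)).fun_neg
        have h2 := (hasDerivAt_id ((x:ℝ):ℂ)).const_mul c
        simpa using h1.fun_add h2
      exact (hasDerivAt_pow k ((x:ℝ):ℂ)).mul hq.cexp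
    have := hF.comp_ofReal
    convert this using 1
    rw [he]
    ring
  have hif : Integrable (fun x : ℝ =>
      (k:ℂ) * ((x:ℂ)^(k-1) * e x) + c * ((x:ℂ)^k * e x) + (-2) * ((x:ℂ)^(k+1) * e x)) :=
    (((integrable_pow_gauss (k-1) c).const_mul _).add
      ((integrable_pow_gauss k c).const_mul _)).add ((integrable_pow_gauss (k+1) c).const_mul _)
  have hz := integral_deriv_zero hd hif (pow_gauss_tendsto_top k c) (pow_gauss_tendsto_bot k c)
  have hA : Integrable (fun x : ℝ => (k:ℂ) * ((x:ℂ)^(k-1) * e x)) :=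
    (integrable_pow_gauss (k-1) c).const_mul _
  have hB : Integrable (fun x : ℝ => c * ((x:ℂ)^k * e x)) :=
    (integrable_pow_gauss k c).const_mul _
  have hC : Integrable (fun x : ℝ => (-2:ℂ) * ((x:ℂ)^(k+1) * e x)) :=
    (integrable_pow_gauss (k+1) c).const_mul _
  have hAB : Integrable (fun x : ℝ => (k:ℂ) * ((x:ℂ)^(k-1) * e x) + c * ((x:ℂ)^k * e x)) :=
    hA.add hB
  rw [integral_add hAB hC, integral_add hA hB,
    integral_const_mul, integral_const_mul, integral_const_mul] at hz
  linear_combination -hz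

lemma sqrt_pi_complex : ((Real.sqrt Real.pi : ℝ) : ℂ) = (Real.pi : ℂ) ^ (1/2 : ℂ) := by
  rw [Real.sqrt_eq_rpow]
  rw [Complex.ofReal_cpow Real.pi_pos.le]
  norm_num

lemma J_eq (c : ℂ) (m : ℕ) :
    ∫ x : ℝ, (x:ℂ)^m * Complex.exp (-(x:ℂ)^2 + c*x)
      = ((Real.sqrt Real.pi : ℝ) : ℂ) * Complex.exp (c^2/4) * EG ((X + C (c/2))^m) := by
  induction m using Nat.twoStepInduction with
  | zero =>
      have h := integral_cexp_quadratic (b := -1) (by norm_num) c 0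
      simp only [pow_zero, one_mul]
      rw [show (fun x : ℝ => Complex.exp (-(x:ℂ)^2 + c*x))
          = fun x : ℝ => Complex.exp ((-1)*(x:ℂ)^2 + c*x + 0) from funext fun x => by ring_nf,
        h, sqrt_pi_complex,
        show ((Real.pi:ℂ) / - -1) = (Real.pi:ℂ) from by norm_num,
        show (0:ℂ) - c^2/(4*(-1)) = c^2/4 from by ring]
      simp
  | one =>
      have h0 : ∫ x : ℝ, (x:ℂ)^0 * Complex.exp (-(x:ℂ)^2 + c*x)
          = ((Real.sqrt Real.pi : ℝ) : ℂ) * Complex.exp (c^2/4) * EG ((X + C (c/2))^0) := by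
        have h := integral_cexp_quadratic (b := -1) (by norm_num) c 0
        simp only [pow_zero, one_mul]
        rw [show (fun x : ℝ => Complex.exp (-(x:ℂ)^2 + c*x))
            = fun x : ℝ => Complex.exp ((-1)*(x:ℂ)^2 + c*x + 0) from funext fun x => by ring_nf,
          h, sqrt_pi_complex,
          show ((Real.pi:ℂ) / - -1) = (Real.pi:ℂ) from by norm_num,
          show (0:ℂ) - c^2/(4*(-1)) = c^2/4 from by ring]
        simp
      have h := ibp_gauss 0 c
      simp only [Nat.cast_zero, zero_mul, zero_add] at h
      have : ∫ x : ℝ, (x:ℂ)^1 * Complex.exp (-(x:ℂ)^2 + c*x)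
          = c/2 * ∫ x : ℝ, (x:ℂ)^0 * Complex.exp (-(x:ℂ)^2 + c*x) := by
        linear_combination h/2
      rw [this, h0]
      have hEG : EG ((X + C (c/2))^1) = c/2 := by
        simp only [pow_one, EG_add]
        rw [show (X : Polynomial ℂ) = monomial 1 1 from by simp [Polynomial.monomial_one_one_eq_X],
          show (C (c/2) : Polynomial ℂ) = monomial 0 (c/2) from by
            simp [Polynomial.monomial_zero_left]]
        rw [EG_monomial, EG_monomial]
        simp [mom]
      rw [hEG]
      simp [pow_zero, EG_one]
      ring
  | more m ih1 ih2 =>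
      have h := ibp_gauss (m+1) c
      rw [show m + 1 - 1 = m from rfl] at h
      rw [ih1, ih2] at h
      have hEG : EG ((X + C (c/2))^(m+2))
          = c/2 * EG ((X + C (c/2))^(m+1)) + ((m:ℂ)+1)/2 * EG ((X + C (c/2))^m) := by
        have hsplit : (X + C (c/2) : Polynomial ℂ)^(m+2)
            = X * (X + C (c/2))^(m+1) + C (c/2) * (X + C (c/2))^(m+1) := by
          rw [pow_succ]
          ring
        rw [hsplit, EG_add, EG_X_mul, EG_C_mul, derivative_pow]
        simp only [derivative_add, derivative_X, derivative_C, add_zero, mul_one]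
        rw [EG_C_mul]
        push_cast
        ring
      rw [hEG]
      push_cast at h
      linear_combination h/2
end
noncomputable section
open Polynomial MeasureTheory Complex Filter

lemma integrable_poly_gauss (P : Polynomial ℂ) (c : ℂ) :
    Integrable (fun x : ℝ => P.eval (x:ℂ) * Complex.exp (-(x:ℂ)^2 + c*x)) := by
  induction P using Polynomial.induction_on' with
  | add p q hp hq =>
      refine (hp.add hq).congr (Eventually.of_forall fun x => ?_)
      simp only [Pi.add_apply, Polynomial.eval_add]
      ring
  | monomial m a =>
      refine ((integrable_pow_gauss m c).const_mul a).congr (Eventually.of_forall fun x => ?_)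
      simp only [Polynomial.eval_monomial]
      ring

lemma integral_poly_gauss (P : Polynomial ℂ) (c : ℂ) :
    ∫ x : ℝ, P.eval (x:ℂ) * Complex.exp (-(x:ℂ)^2 + c*x)
      = ((Real.sqrt Real.pi : ℝ):ℂ) * Complex.exp (c^2/4) * EG (P.comp (X + C (c/2))) := by
  induction P using Polynomial.induction_on' with
  | add p q hp hq =>
      simp only [Polynomial.eval_add, add_mul]
      rw [integral_add (integrable_poly_gauss p c) (integrable_poly_gauss q c), hp, hq,
        Polynomial.add_comp, EG_add]
      ring
  | monomial m a =>
      simp only [Polynomial.eval_monomial]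
      rw [show (fun x:ℝ => a*(x:ℂ)^m * Complex.exp (-(x:ℂ)^2 + c*x))
          = fun x:ℝ => a * ((x:ℂ)^m * Complex.exp (-(x:ℂ)^2 + c*x)) from
          funext fun x => by ring,
        integral_const_mul, J_eq, Polynomial.monomial_comp, EG_C_mul]
      ring

lemma hermP_succ_eq (n : ℕ) :
    hermP ℝ (n+1) = C 2 * X * hermP ℝ n - derivative (hermP ℝ n) := by
  rw [hermP_succ', hermP_derivative]

lemma iteratedDeriv_gauss (n : ℕ) : ∀ x : ℝ,
    iteratedDeriv n (fun y : ℝ => Real.exp (-y^2)) x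
      = (-1:ℝ)^n * (hermP ℝ n).eval x * Real.exp (-x^2) := by
  induction n with
  | zero => intro x; simp [hermP]
  | succ n ih =>
      intro x
      rw [iteratedDeriv_succ,
        show iteratedDeriv n (fun y:ℝ => Real.exp (-y^2))
          = fun z => (-1:ℝ)^n * ((hermP ℝ n).eval z * Real.exp (-z^2)) from
          funext fun z => by rw [ih z]; ring]
      have hd : HasDerivAt (fun z:ℝ => (-1:ℝ)^n * ((hermP ℝ n).eval z * Real.exp (-z^2)))
          ((-1:ℝ)^n * ((derivative (hermP ℝ n)).eval x * Real.exp (-x^2)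
            + (hermP ℝ n).eval x * (Real.exp (-x^2) * (-(2*x))))) x := by
        have hp := (hermP ℝ n).hasDerivAt x
        have hq : HasDerivAt (fun z:ℝ => -z^2) (-(2*x)) x := by
          simpa using (hasDerivAt_pow 2 x).fun_neg
        exact (hp.mul hq.exp).const_mul ((-1:ℝ)^n)
      rw [hd.deriv, hermP_succ_eq]
      simp only [Polynomial.eval_sub, Polynomial.eval_mul, Polynomial.eval_X, map_ofNat,
        Polynomial.eval_ofNat]
      ring

lemma hermP_eval_ofReal (n : ℕ) (y : ℝ) :
    (((hermP ℝ n).eval y : ℝ) : ℂ) = (hermP ℂ n).eval (y:ℂ) := by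
  rw [← hermP_map (algebraMap ℝ ℂ) n, Polynomial.eval_map]
  exact (Polynomial.eval₂_at_apply (algebraMap ℝ ℂ) y).symm

lemma hermiteFun_complex (n : ℕ) (y : ℝ) :
    (hermiteFun n y : ℂ)
      = (((Real.sqrt (2^n * n.factorial * Real.sqrt Real.pi))⁻¹ : ℝ) : ℂ) *
          (hermP ℂ n).eval (y:ℂ) * Complex.exp (-(y:ℂ)^2/2) := by
  have h1 : hermiteFun n y
      = (Real.sqrt (2^n * n.factorial * Real.sqrt Real.pi))⁻¹ *
          ((hermP ℝ n).eval y) * Real.exp (-y^2/2) := by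
    unfold hermiteFun
    rw [iteratedDeriv_gauss n y]
    have hs : (-1:ℝ)^n * (-1:ℝ)^n = 1 := by
      rw [← pow_add, ← two_mul, pow_mul]; norm_num
    have he : Real.exp (y^2/2) * Real.exp (-y^2) = Real.exp (-y^2/2) := by
      rw [← Real.exp_add]; ring_nf
    calc (Real.sqrt (2^n * n.factorial * Real.sqrt Real.pi))⁻¹ * (-1)^n *
          Real.exp (y^2/2) * ((-1:ℝ)^n * (hermP ℝ n).eval y * Real.exp (-y^2))
        = ((-1:ℝ)^n * (-1:ℝ)^n) * ((Real.sqrt (2^n * n.factorial * Real.sqrt Real.pi))⁻¹ *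
            (hermP ℝ n).eval y * (Real.exp (y^2/2) * Real.exp (-y^2))) := by ring
      _ = _ := by rw [hs, he]; ring
  rw [h1]
  push_cast [hermP_eval_ofReal]
  rfl
end
noncomputable section
open Polynomial MeasureTheory Complex Filter

theorem wigner_hermite (n : ℕ) (x ξ : ℝ) :
    wigner1 1 (fun y => (hermiteFun n y : ℂ)) (fun y => (hermiteFun n y : ℂ)) x ξ =
      ((2 * (-1 : ℝ) ^ n * Real.exp (-(x ^ 2 + ξ ^ 2)) *
        laguerreFun n (2 * (x ^ 2 + ξ ^ 2)) : ℝ) : ℂ) := by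
  set cN : ℝ := (Real.sqrt (2 ^ n * n.factorial * Real.sqrt Real.pi))⁻¹ with hcN
  set c₀ : ℂ := -2 * Complex.I * ξ with hc₀
  set Q : Polynomial ℂ := (hermP ℂ n).comp (C (x:ℂ) + X) * (hermP ℂ n).comp (C (x:ℂ) - X)
    with hQ
  set g : ℝ → ℂ := fun s => Q.eval (s:ℂ) * Complex.exp (-(s:ℂ)^2 + c₀ * s) with hg
  have hint : ∀ t : ℝ,
      Complex.exp (-(Complex.I / ((1:ℝ) : ℂ)) * ((t * ξ : ℝ) : ℂ)) *
        ((hermiteFun n (x + t/2) : ℝ) : ℂ) *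
        (starRingEnd ℂ) ((hermiteFun n (x - t/2) : ℝ) : ℂ)
      = (cN:ℂ)^2 * Complex.exp (-(x:ℂ)^2) * g (t/2) := by
    intro t
    rw [Complex.conj_ofReal, hermiteFun_complex, hermiteFun_complex, hg, hQ]
    simp only [Polynomial.eval_mul, Polynomial.eval_comp, Polynomial.eval_add,
      Polynomial.eval_sub, Polynomial.eval_C, Polynomial.eval_X]
    rw [← hcN]
    push_cast
    rw [show ((x:ℂ) + (t:ℂ)/2)^2 = ((x:ℂ)+(t:ℂ)/2)^2 from rfl]
    calc Complex.exp (-(Complex.I/1) * ((t:ℂ) * ξ)) *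
          ((cN:ℂ) * eval ((x:ℂ) + (t:ℂ)/2) (hermP ℂ n) * Complex.exp (-((x:ℂ)+(t:ℂ)/2)^2/2)) *
          ((cN:ℂ) * eval ((x:ℂ) - (t:ℂ)/2) (hermP ℂ n) * Complex.exp (-((x:ℂ)-(t:ℂ)/2)^2/2))
        = (cN:ℂ)^2 * (eval ((x:ℂ) + (t:ℂ)/2) (hermP ℂ n) * eval ((x:ℂ) - (t:ℂ)/2) (hermP ℂ n)) *
            (Complex.exp (-(Complex.I/1) * ((t:ℂ) * ξ)) * Complex.exp (-((x:ℂ)+(t:ℂ)/2)^2/2) *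
              Complex.exp (-((x:ℂ)-(t:ℂ)/2)^2/2)) := by ring
      _ = (cN:ℂ)^2 * (eval ((x:ℂ) + (t:ℂ)/2) (hermP ℂ n) * eval ((x:ℂ) - (t:ℂ)/2) (hermP ℂ n)) *
            (Complex.exp (-(x:ℂ)^2) * Complex.exp (-((t:ℂ)/2)^2 + c₀ * ((t:ℂ)/2))) := by
          rw [← Complex.exp_add, ← Complex.exp_add, ← Complex.exp_add]
          congr 1
          rw [hc₀]
          ring
      _ = _ := by ring
  have step1 : wigner1 1 (fun y => (hermiteFun n y : ℂ)) (fun y => (hermiteFun n y : ℂ)) x ξ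
      = (cN:ℂ)^2 * Complex.exp (-(x:ℂ)^2) * ∫ t : ℝ, g (t/2) := by
    unfold wigner1
    rw [show (fun t : ℝ => Complex.exp (-(Complex.I / ((1:ℝ) : ℂ)) * ((t * ξ : ℝ) : ℂ)) *
        ((hermiteFun n (x + t/2) : ℝ) : ℂ) *
        (starRingEnd ℂ) ((hermiteFun n (x - t/2) : ℝ) : ℂ))
      = fun t : ℝ => (cN:ℂ)^2 * Complex.exp (-(x:ℂ)^2) * g (t/2) from funext hint]
    rw [integral_const_mul]
  have step2 : ∫ t : ℝ, g (t/2) = (2:ℂ) * ∫ s : ℝ, g s := by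
    rw [MeasureTheory.Measure.integral_comp_div g 2]
    rw [show |(2:ℝ)| = 2 from by norm_num]
    rw [Complex.real_smul]
    norm_num
  have step3 : ∫ s : ℝ, g s
      = ((Real.sqrt Real.pi : ℝ):ℂ) * Complex.exp (c₀^2/4) * EG (Q.comp (X + C (c₀/2))) := by
    rw [hg]
    exact integral_poly_gauss Q c₀
  have hc4 : c₀^2/4 = -(ξ:ℂ)^2 := by
    rw [hc₀]
    linear_combination (ξ:ℂ)^2 * Complex.I_sq
  have hQcomp : Q.comp (X + C (c₀/2)) = Pa ((x:ℂ) - Complex.I*ξ) n * Qb ((x:ℂ) + Complex.I*ξ) n := by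
    have hd : c₀/2 = -(Complex.I*ξ) := by rw [hc₀]; ring
    rw [hQ, Polynomial.mul_comp, Polynomial.comp_assoc, Polynomial.comp_assoc]
    congr 1
    · unfold Pa
      congr 1
      rw [Polynomial.add_comp, Polynomial.C_comp, Polynomial.X_comp, hd]
      simp only [map_neg, map_mul, map_add, map_sub]
      ring
    · unfold Qb
      congr 1
      rw [Polynomial.sub_comp, Polynomial.C_comp, Polynomial.X_comp, hd]
      simp only [map_neg, map_mul, map_add, map_sub]
      ring
  have hab : ((x:ℂ) - Complex.I*ξ) * ((x:ℂ) + Complex.I*ξ) = (x:ℂ)^2 + (ξ:ℂ)^2 := by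
    linear_combination (-(ξ:ℂ)^2) * Complex.I_sq
  have hS : EG (Q.comp (X + C (c₀/2)))
      = (-1:ℂ)^n * 2^n * (n.factorial : ℂ) *
          ∑ k ∈ Finset.range (n+1),
            (n.choose k : ℂ) * (-(2*((x:ℂ)^2 + (ξ:ℂ)^2)))^k / (k.factorial : ℂ) := by
    rw [hQcomp]
    have := Sc_nn ((x:ℂ) - Complex.I*ξ) ((x:ℂ) + Complex.I*ξ) n
    rw [Sc, hab] at this
    exact this
  have hlag : ((laguerreFun n (2 * (x ^ 2 + ξ ^ 2)) : ℝ) : ℂ)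
      = ∑ k ∈ Finset.range (n+1),
          (n.choose k : ℂ) * (-(2*((x:ℂ)^2 + (ξ:ℂ)^2)))^k / (k.factorial : ℂ) := by
    rw [laguerreFun]
    push_cast
    rfl
  have hrc : (cN:ℂ)^2 * ((Real.sqrt Real.pi : ℝ):ℂ) * ((-1:ℂ)^n * 2^n * (n.factorial : ℂ))
      = 2 * (-1:ℂ)^n / 2 := by
    have hA : (0:ℝ) < 2 ^ n * n.factorial * Real.sqrt Real.pi := by
      positivity
    have h1 : (cN^2 * Real.sqrt Real.pi : ℝ) * (2^n * n.factorial) = 1 := by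
      rw [hcN]
      rw [← Real.sqrt_inv]
      rw [Real.sq_sqrt (by positivity)]
      field_simp
    have h1c : ((cN:ℂ)^2 * ((Real.sqrt Real.pi : ℝ):ℂ)) * ((2:ℂ)^n * (n.factorial:ℂ)) = 1 := by
      exact_mod_cast congrArg (Complex.ofReal) h1
    linear_combination (-1:ℂ)^n * h1c
  rw [step1, step2, step3, hc4, hS]
  rw [show ((2 * (-1:ℝ)^n * Real.exp (-(x^2+ξ^2)) * laguerreFun n (2*(x^2+ξ^2)) : ℝ) : ℂ)
      = 2 * (-1:ℂ)^n * Complex.exp (-((x:ℂ)^2+(ξ:ℂ)^2)) *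
        ((laguerreFun n (2*(x^2+ξ^2)) : ℝ) : ℂ) from by push_cast; ring]
  rw [hlag]
  rw [show Complex.exp (-((x:ℂ)^2 + (ξ:ℂ)^2)) = Complex.exp (-(x:ℂ)^2) * Complex.exp (-(ξ:ℂ)^2)
    from by rw [← Complex.exp_add]; ring_nf]
  linear_combination (2 * Complex.exp (-(x:ℂ)^2) * Complex.exp (-(ξ:ℂ)^2) *
    (∑ k ∈ Finset.range (n+1),
      (n.choose k : ℂ) * (-(2*((x:ℂ)^2 + (ξ:ℂ)^2)))^k / (k.factorial : ℂ))) * hrc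
end
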